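/- Let p_n = C n^{-τ} (suitably normalized) be a power-law distribution on positive integers with exponent τ > 1, so that p_{n+} := Σ_{k≥n} p_k satisfies p_{n+} ≥ c n^{-(τ-1)} for a constant c > 0. Then the sum Σ_{n=1}^∞ (Σ_{i=1}^n p_{i+}^{-1/d}) p_n diverges whenever τ ≤ (2d-1)/(d-1) (for d ≥ 2). -/

import Mathlib

open Finset Real

lemma aux_mvt {τ : ℝ} (hτ : 1 < τ) {a : ℝ} (ha : 1 ≤ a) :
    (τ - 1) * (a + 1) ^ (-τ) ≤ a ^ (1 - τ) - (a + 1) ^ (1 - τ) := by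
  have hab : a < a + 1 := by linarith
  have hcont : ContinuousOn (fun x : ℝ => x ^ (1 - τ)) (Set.Icc a (a + 1)) := by
    apply ContinuousOn.rpow_const continuousOn_id
    intro x hx
    exact Or.inl (by simp only [id]; exact ne_of_gt (by linarith [hx.1]))
  have hderiv : ∀ x ∈ Set.Ioo a (a + 1),
      HasDerivAt (fun x : ℝ => x ^ (1 - τ)) ((1 - τ) * x ^ (-τ)) x := by
    intro x hx
    have hx0 : x ≠ 0 := ne_of_gt (by linarith [hx.1])
    have := Real.hasDerivAt_rpow_const (p := 1 - τ) (x := x) (Or.inl hx0)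
    simpa [show 1 - τ - 1 = -τ by ring] using this
  obtain ⟨ξ, hξ, hsl⟩ := exists_hasDerivAt_eq_slope (fun x : ℝ => x ^ (1 - τ))
    (fun x => (1 - τ) * x ^ (-τ)) hab hcont hderiv
  have hξ0 : 0 < ξ := by linarith [hξ.1]
  have hle : (a + 1) ^ (-τ) ≤ ξ ^ (-τ) :=
    Real.rpow_le_rpow_of_nonpos hξ0 (le_of_lt hξ.2) (by linarith)
  have : (1 - τ) * ξ ^ (-τ) = (a + 1) ^ (1 - τ) - a ^ (1 - τ) := by
    rw [hsl]; field_simp; ring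
  nlinarith [this, hle]

lemma aux_tail {τ C : ℝ} (hτ : 1 < τ) (hC : 0 < C) (p : ℕ → ℝ)
    (hp0 : ∀ n, 0 ≤ p n) (hsum : Summable p)
    (hp : ∀ n : ℕ, 1 ≤ n → p n = C * (n : ℝ) ^ (-τ))
    (i : ℕ) (hi : 1 ≤ i) :
    (∑' k : ℕ, if i ≤ k then p k else 0) ≤ (C + C / (τ - 1)) * (i : ℝ) ^ (1 - τ) := by
  set g : ℕ → ℝ := fun k => if i ≤ k then p k else 0 with hg
  have hi1 : (1 : ℝ) ≤ (i : ℝ) := by exact_mod_cast hi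
  have hgsum : Summable g := by
    apply Summable.of_nonneg_of_le (fun k => ?_) (fun k => ?_) hsum <;>
      by_cases h : i ≤ k <;> simp [hg, h, hp0 k]
  -- step 1: tsum g = ∑' k, p (k + i)
  have h1 : ∑' k, g k = ∑' k, p (k + i) := by
    rw [← hgsum.sum_add_tsum_nat_add i]
    have : ∀ k ∈ Finset.range i, g k = 0 := by
      intro k hk
      simp [hg, Nat.not_le.mpr (Finset.mem_range.mp hk)]
    rw [Finset.sum_eq_zero this, zero_add]
    congr 1; funext k; simp [hg, Nat.le_add_left]
  have hsum2 : Summable (fun k => p (k + i)) := by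
    have := hsum.comp_injective (add_left_injective i)
    exact this
  have h2 : ∑' k, p (k + i) = p i + ∑' k, p (k + 1 + i) := by
    rw [hsum2.tsum_eq_zero_add]
    simp [add_comm, add_assoc, add_left_comm]
  -- step 2: bound the shifted tail
  have h3 : ∑' k, p (k + 1 + i) ≤ (C / (τ - 1)) * (i : ℝ) ^ (1 - τ) := by
    apply Real.tsum_le_of_sum_range_le (fun k => hp0 _)
    intro n
    have key : ∀ k : ℕ, p (k + 1 + i) ≤
        (C / (τ - 1)) * (((k : ℝ) + i) ^ (1 - τ) - (((k : ℝ) + 1 + i)) ^ (1 - τ)) := by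
      intro k
      have ha : (1 : ℝ) ≤ (k : ℝ) + i := by
        have : (0:ℝ) ≤ (k:ℝ) := Nat.cast_nonneg k
        linarith
      have := aux_mvt hτ ha
      have hcast : ((k + 1 + i : ℕ) : ℝ) = (k : ℝ) + i + 1 := by push_cast; ring
      rw [hp (k + 1 + i) (by omega), hcast]
      have hτ1 : 0 < τ - 1 := by linarith
      rw [div_mul_eq_mul_div, le_div_iff₀ hτ1]
      have h2' : ((k:ℝ) + 1 + i) = ((k:ℝ) + i + 1) := by ring
      rw [h2']
      nlinarith [this]
    calc ∑ k ∈ Finset.range n, p (k + 1 + i)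
        ≤ ∑ k ∈ Finset.range n, (C / (τ - 1)) *
            (((k : ℝ) + i) ^ (1 - τ) - (((k : ℝ) + 1 + i)) ^ (1 - τ)) :=
          Finset.sum_le_sum fun k _ => key k
      _ = (C / (τ - 1)) * (((0 : ℝ) + i) ^ (1 - τ) - (((n : ℝ) + i)) ^ (1 - τ)) := by
          rw [← Finset.mul_sum]
          congr 1
          have := Finset.sum_range_sub' (fun k : ℕ => ((k : ℝ) + i) ^ (1 - τ)) n
          simpa [add_comm, add_assoc, add_left_comm] using this
      _ ≤ (C / (τ - 1)) * (i : ℝ) ^ (1 - τ) := by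
          have h0 : (0:ℝ) ≤ (((n : ℝ) + i)) ^ (1 - τ) := by positivity
          have hd : 0 < C / (τ - 1) := by
            apply div_pos hC; linarith
          rw [zero_add]
          nlinarith [h0, hd]
  -- combine
  have h4 : p i = C * (i : ℝ) ^ (-τ) := hp i hi
  have h5 : (i : ℝ) ^ (-τ) ≤ (i : ℝ) ^ (1 - τ) :=
    Real.rpow_le_rpow_of_exponent_le hi1 (by linarith)
  rw [h1, h2, h4]
  nlinarith [h3, h5, hC]

theorem stmt13 (d : ℕ) (hd : 2 ≤ d) (τ : ℝ) (hτ : 1 < τ)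
    (hτ2 : τ ≤ (2 * (d : ℝ) - 1) / ((d : ℝ) - 1))
    (C c : ℝ) (hC : 0 < C) (hc : 0 < c)
    (p : ℕ → ℝ) (hp0 : ∀ n, 0 ≤ p n) (hprob : ∑' n, p n = 1)
    (hp : ∀ n : ℕ, 1 ≤ n → p n = C * (n : ℝ) ^ (-τ))
    (htail : ∀ n : ℕ, 1 ≤ n →
      c * (n : ℝ) ^ (-(τ - 1)) ≤ ∑' k : ℕ, if n ≤ k then p k else 0) :
    ¬ Summable (fun n : ℕ =>
      (∑ i ∈ Finset.Icc 1 n,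
          (∑' k : ℕ, if i ≤ k then p k else 0) ^ (-(1 : ℝ) / d)) * p n) := by
  intro hS
  have hd' : (2 : ℝ) ≤ (d : ℝ) := by exact_mod_cast hd
  have hdpos : (0 : ℝ) < (d : ℝ) := by linarith
  have hsum : Summable p := by
    by_contra h
    rw [tsum_eq_zero_of_not_summable h] at hprob
    norm_num at hprob
  set K : ℝ := C + C / (τ - 1) with hKdef
  have hK : 0 < K := by
    have : 0 < C / (τ - 1) := div_pos hC (by linarith)
    simp only [hKdef]; linarith
  set a : ℝ := (τ - 1) / d with hadef
  have ha : 0 < a := div_pos (by linarith) hdpos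
  set K' : ℝ := K ^ (-(1 : ℝ) / d) with hK'def
  have hK' : 0 < K' := Real.rpow_pos_of_pos hK _
  set T : ℕ → ℝ := fun i => ∑' k : ℕ, if i ≤ k then p k else 0 with hTdef
  -- exponent inequality
  have hexp : (-1 : ℝ) ≤ 1 + a - τ := by
    have h6 : τ * ((d : ℝ) - 1) ≤ 2 * d - 1 := by
      rw [← le_div_iff₀ (by linarith : (0:ℝ) < (d:ℝ) - 1)]; exact hτ2
    have h7 : τ - 2 ≤ a := by
      rw [hadef, le_div_iff₀ hdpos]; nlinarith
    linarith
  -- term lower bound for T i ^ (-1/d)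
  have hterm : ∀ i : ℕ, 1 ≤ i → K' * (i : ℝ) ^ a ≤ T i ^ (-(1 : ℝ) / d) := by
    intro i hi
    have hi1 : (1 : ℝ) ≤ (i : ℝ) := by exact_mod_cast hi
    have hipos : (0 : ℝ) < (i : ℝ) := by linarith
    have hTpos : 0 < T i :=
      lt_of_lt_of_le (by positivity) (htail i hi)
    have hTub : T i ≤ K * (i : ℝ) ^ (1 - τ) :=
      aux_tail hτ hC p hp0 hsum hp i hi
    have h1 : (K * (i : ℝ) ^ (1 - τ)) ^ (-(1 : ℝ) / d) ≤ T i ^ (-(1 : ℝ) / d) := by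
      apply Real.rpow_le_rpow_of_nonpos hTpos hTub
      apply div_nonpos_of_nonpos_of_nonneg <;> norm_num
    refine le_trans (le_of_eq ?_) h1
    rw [Real.mul_rpow (le_of_lt hK) (by positivity),
      ← Real.rpow_mul (le_of_lt hipos)]
    have hae : (1 - τ) * (-1 / (d:ℝ)) = a := by
      rw [hadef]; field_simp; ring
    rw [hae]
  -- inner sum lower bound
  have hinner : ∀ n : ℕ, 1 ≤ n →
      ((n : ℝ) / 2) * (K' * ((n : ℝ) / 2) ^ a) ≤
        ∑ i ∈ Finset.Icc 1 n, T i ^ (-(1 : ℝ) / d) := by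
    intro n hn
    have hsub : Finset.Icc (n / 2 + 1) n ⊆ Finset.Icc 1 n :=
      Finset.Icc_subset_Icc_left (by omega)
    have hstep2 : ∀ i ∈ Finset.Icc (n / 2 + 1) n,
        K' * ((n : ℝ) / 2) ^ a ≤ T i ^ (-(1 : ℝ) / d) := by
      intro i hi
      rw [Finset.mem_Icc] at hi
      have hi1 : 1 ≤ i := by omega
      refine le_trans ?_ (hterm i hi1)
      have h1 : (n : ℝ) / 2 ≤ (i : ℝ) := by
        have h2 : (n : ℝ) < 2 * (((n / 2 : ℕ) : ℝ) + 1) := by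
          exact_mod_cast (by omega : n < 2 * (n / 2 + 1))
        have h3 : ((n / 2 : ℕ) : ℝ) + 1 ≤ (i : ℝ) := by exact_mod_cast hi.1
        linarith
      exact mul_le_mul_of_nonneg_left
        (Real.rpow_le_rpow (by positivity) h1 ha.le) hK'.le
    have hcardsum := Finset.card_nsmul_le_sum (Finset.Icc (n / 2 + 1) n)
      (fun i => T i ^ (-(1 : ℝ) / d)) (K' * ((n : ℝ) / 2) ^ a) hstep2
    rw [nsmul_eq_mul] at hcardsum
    have hcard2 : (n : ℝ) / 2 ≤ (((Finset.Icc (n / 2 + 1) n).card : ℕ) : ℝ) := by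
      rw [Nat.card_Icc]
      have h4 : (n : ℝ) ≤ 2 * ((n + 1 - (n / 2 + 1) : ℕ) : ℝ) := by
        exact_mod_cast (by omega : n ≤ 2 * (n + 1 - (n / 2 + 1)))
      linarith
    calc ((n : ℝ) / 2) * (K' * ((n : ℝ) / 2) ^ a)
        ≤ (((Finset.Icc (n / 2 + 1) n).card : ℕ) : ℝ) * (K' * ((n : ℝ) / 2) ^ a) :=
          mul_le_mul_of_nonneg_right hcard2 (by positivity)
      _ ≤ ∑ i ∈ Finset.Icc (n / 2 + 1) n, T i ^ (-(1 : ℝ) / d) := hcardsum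
      _ ≤ ∑ i ∈ Finset.Icc 1 n, T i ^ (-(1 : ℝ) / d) :=
          Finset.sum_le_sum_of_subset_of_nonneg hsub (fun i hi _ =>
            Real.rpow_nonneg (tsum_nonneg fun k => by by_cases h : i ≤ k <;> simp [h, hp0 k]) _)
  -- final comparison with harmonic series
  set B : ℝ := K' * C / (2 : ℝ) ^ (1 + a) with hBdef
  have h2a : (0 : ℝ) < (2 : ℝ) ^ (1 + a) := Real.rpow_pos_of_pos two_pos _
  have hB : 0 < B := by
    rw [hBdef]; positivity
  have hFlb : ∀ n : ℕ, B * ((n : ℝ))⁻¹ ≤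
      (∑ i ∈ Finset.Icc 1 n, T i ^ (-(1 : ℝ) / d)) * p n := by
    intro n
    rcases Nat.eq_zero_or_pos n with h0 | hn
    · subst h0; simp
    · have hn1 : (1 : ℝ) ≤ (n : ℝ) := by exact_mod_cast hn
      have hnpos : (0 : ℝ) < (n : ℝ) := by linarith
      have hhalf : (0 : ℝ) < (n : ℝ) / 2 := by linarith
      have h2 := mul_le_mul_of_nonneg_right (hinner n hn) (hp0 n)
      refine le_trans ?_ h2
      rw [hp n hn]
      have e0 : ((n : ℝ) / 2) * ((n : ℝ) / 2) ^ a = ((n : ℝ) / 2) ^ (1 + a) := by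
        rw [Real.rpow_add hhalf, Real.rpow_one]
      have e1 : ((n : ℝ) / 2) ^ (1 + a) = (n : ℝ) ^ (1 + a) / (2 : ℝ) ^ (1 + a) :=
        Real.div_rpow hnpos.le (by norm_num : (0:ℝ) ≤ 2) (1 + a)
      have e2 : (n : ℝ) ^ (1 + a) * (n : ℝ) ^ (-τ) = (n : ℝ) ^ (1 + a - τ) := by
        rw [← Real.rpow_add hnpos]; ring_nf
      have e3 : (n : ℝ) ^ (-1 : ℝ) ≤ (n : ℝ) ^ (1 + a - τ) :=
        Real.rpow_le_rpow_of_exponent_le hn1 hexp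
      have e4 : (n : ℝ) ^ (-1 : ℝ) = ((n : ℝ))⁻¹ := Real.rpow_neg_one _
      calc B * ((n : ℝ))⁻¹ = B * (n : ℝ) ^ (-1 : ℝ) := by rw [e4]
        _ ≤ B * (n : ℝ) ^ (1 + a - τ) := mul_le_mul_of_nonneg_left e3 hB.le
        _ = ((n : ℝ) / 2) * (K' * ((n : ℝ) / 2) ^ a) * (C * (n : ℝ) ^ (-τ)) := by
            rw [← e2, hBdef,
              show ((n : ℝ) / 2) * (K' * ((n : ℝ) / 2) ^ a) * (C * (n : ℝ) ^ (-τ))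
                = K' * C * (((n : ℝ) / 2) * ((n : ℝ) / 2) ^ a) * (n : ℝ) ^ (-τ) from by ring,
              e0, e1]
            field_simp
  have hGsum : Summable (fun n : ℕ => B * ((n : ℝ))⁻¹) :=
    Summable.of_nonneg_of_le (fun n => by positivity) hFlb hS
  have : Summable (fun n : ℕ => ((n : ℝ))⁻¹) :=
    (summable_mul_left_iff hB.ne').mp hGsum
  exact Real.not_summable_natCast_inv this
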